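/- Let c_ii > 0, c_jj > 0 and let c, s be real numbers with c² + s² = c_ii·c_jj. Let θ_i, θ_j be real numbers with θ_j − θ_i = atan2(s, c), where atan2(s,c) denotes the argument of the nonzero complex number c + s·i. Define e_k := √(c_kk)·cos θ_k and f_k := √(c_kk)·sin θ_k for k ∈ {i,j}. Then e_i² + f_i² = c_ii, e_j² + f_j² = c_jj, e_i·e_j + f_i·f_j = c, and e_i·f_j − e_j·f_i = s. -/

import Mathlib

/-- Exactness (recovery) direction of the alternative OPF formulation: from
`c_ii, c_jj > 0`, `c² + s² = c_ii·c_jj` and `θ_j - θ_i = atan2(s,c)` (the argument of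
the complex number `c + s·i`), the rectangular coordinates `e_k = √c_kk cos θ_k`,
`f_k = √c_kk sin θ_k` satisfy the defining relations. -/
theorem opf_recovery
    (cii cjj c s θi θj ei fi ej fj : ℝ)
    (hcii : 0 < cii) (hcjj : 0 < cjj)
    (hcs : c ^ 2 + s ^ 2 = cii * cjj)
    (hθ : θj - θi = Complex.arg (c + s * Complex.I))
    (hei : ei = Real.sqrt cii * Real.cos θi) (hfi : fi = Real.sqrt cii * Real.sin θi)
    (hej : ej = Real.sqrt cjj * Real.cos θj) (hfj : fj = Real.sqrt cjj * Real.sin θj) :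
    ei ^ 2 + fi ^ 2 = cii ∧ ej ^ 2 + fj ^ 2 = cjj ∧
      ei * ej + fi * fj = c ∧ ei * fj - ej * fi = s := by
  set z : ℂ := c + s * Complex.I with hz
  have hre : z.re = c := by simp [hz]
  have him : z.im = s := by simp [hz]
  have habs : ‖z‖ = Real.sqrt (cii * cjj) := by
    rw [Complex.norm_def, Complex.normSq_apply, hre, him, ← hcs]; ring_nf
  have hzne : z ≠ 0 := by
    intro h
    rw [h] at habs
    simp at habs
    have := Real.sqrt_pos.mpr (mul_pos hcii hcjj)
    rw [← habs] at this; exact lt_irrefl 0 this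
  have hcos : Real.cos (θj - θi) = c / Real.sqrt (cii * cjj) := by
    rw [hθ, Complex.cos_arg hzne, hre, habs]
  have hsin : Real.sin (θj - θi) = s / Real.sqrt (cii * cjj) := by
    rw [hθ, Complex.sin_arg, him, habs]
  have hsqrt : Real.sqrt cii * Real.sqrt cjj = Real.sqrt (cii * cjj) :=
    (Real.sqrt_mul hcii.le cjj).symm
  have hpos : (0:ℝ) < Real.sqrt (cii * cjj) := Real.sqrt_pos.mpr (mul_pos hcii hcjj)
  have hii : ei ^ 2 + fi ^ 2 = cii := by
    rw [hei, hfi]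
    have : Real.sqrt cii ^ 2 = cii := Real.sq_sqrt hcii.le
    nlinarith [Real.sin_sq_add_cos_sq θi]
  have hjj : ej ^ 2 + fj ^ 2 = cjj := by
    rw [hej, hfj]
    have : Real.sqrt cjj ^ 2 = cjj := Real.sq_sqrt hcjj.le
    nlinarith [Real.sin_sq_add_cos_sq θj]
  refine ⟨hii, hjj, ?_, ?_⟩
  · have : ei * ej + fi * fj = Real.sqrt cii * Real.sqrt cjj * Real.cos (θj - θi) := by
      rw [hei, hfi, hej, hfj, Real.cos_sub]; ring
    rw [this, hsqrt, hcos, mul_div_cancel₀ _ hpos.ne']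
  · have : ei * fj - ej * fi = Real.sqrt cii * Real.sqrt cjj * Real.sin (θj - θi) := by
      rw [hei, hfi, hej, hfj, Real.sin_sub]; ring
    rw [this, hsqrt, hsin, mul_div_cancel₀ _ hpos.ne']
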